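/- Let K, G, H be groupoids, let g : K ⥤ G be a fully faithful functor, and let h : K ⥤ H be any functor. Then the data (P, g', h', α) of the pushout of G and H over K (a groupoid P with functors g' : G ⥤ P, h' : H ⥤ P and a natural isomorphism α : h ⋙ h' ≅ g ⋙ g' satisfying the universal property: for every groupoid F, functors g₁ : G ⥤ F, h₁ : H ⥤ F and natural isomorphism β : h ⋙ h₁ ≅ g ⋙ g₁ there is a unique functor f : P ⥤ F with g' ⋙ f = g₁, h' ⋙ f = h₁ and whiskering of α by f equal to β) can be chosen so that, in addition, h' : H ⥤ P is fully faithful, and if g is moreover essentially surjective (hence a weak equivalence), then h' is also essentially surjective (hence a weak equivalence). -/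

import Mathlib

open CategoryTheory Opposite

universe u

namespace Paper

variable {K G H : Grpd.{u, u}} (g : ↥K ⥤ ↥G) (h : ↥K ⥤ ↥H)

/-- Vertices of the pushout quiver: objects of `G` and objects of `H`. -/
inductive PV (g : ↥K ⥤ ↥G) (h : ↥K ⥤ ↥H) : Type u
  | gv : ↥G → PV g h
  | hv : ↥H → PV g h

/-- Edges of the pushout quiver. -/
inductive PEdge : PV g h → PV g h → Type u
  | ge {a b : ↥G} (f : a ⟶ b) : PEdge (.gv a) (.gv b)
  | he {x y : ↥H} (φ : x ⟶ y) : PEdge (.hv x) (.hv y)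
  | fwd (k : ↥K) : PEdge (.hv (h.obj k)) (.gv (g.obj k))
  | bwd (k : ↥K) : PEdge (.gv (g.obj k)) (.hv (h.obj k))

instance : Quiver (PV g h) := ⟨PEdge g h⟩

/-- An edge as a morphism of the path category. -/
abbrev tp {v w : PV g h} (e : PEdge g h v w) :
    (Paths.of (V := PV g h)).obj v ⟶ (Paths.of (V := PV g h)).obj w :=
  (Paths.of (V := PV g h)).map e

/-- Relations imposed on the path category. -/
inductive PRel : HomRel (Paths (PV g h))
  | gid (a : ↥G) : PRel (tp g h (PEdge.ge (𝟙 a))) (𝟙 ((Paths.of (V := PV g h)).obj (PV.gv a)))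
  | gcomp {a b c : ↥G} (f : a ⟶ b) (f' : b ⟶ c) :
      PRel (tp g h (PEdge.ge f) ≫ tp g h (PEdge.ge f')) (tp g h (PEdge.ge (f ≫ f')))
  | hid (x : ↥H) : PRel (tp g h (PEdge.he (𝟙 x))) (𝟙 ((Paths.of (V := PV g h)).obj (PV.hv x)))
  | hcomp {x y z : ↥H} (φ : x ⟶ y) (φ' : y ⟶ z) :
      PRel (tp g h (PEdge.he φ) ≫ tp g h (PEdge.he φ')) (tp g h (PEdge.he (φ ≫ φ')))
  | fwdbwd (k : ↥K) :
      PRel (tp g h (PEdge.fwd k) ≫ tp g h (PEdge.bwd k)) (𝟙 ((Paths.of (V := PV g h)).obj (PV.hv (h.obj k))))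
  | bwdfwd (k : ↥K) :
      PRel (tp g h (PEdge.bwd k) ≫ tp g h (PEdge.fwd k)) (𝟙 ((Paths.of (V := PV g h)).obj (PV.gv (g.obj k))))
  | nat {k k' : ↥K} (f : k ⟶ k') :
      PRel (tp g h (PEdge.fwd k) ≫ tp g h (PEdge.ge (g.map f)))
        (tp g h (PEdge.he (h.map f)) ≫ tp g h (PEdge.fwd k'))

/-- The underlying category of the pushout. -/
abbrev PC := CategoryTheory.Quotient (PRel g h)

/-- Quotient functor from paths. -/
abbrev Qf : Paths (PV g h) ⥤ PC g h := CategoryTheory.Quotient.functor _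

/-- Images of edges in the quotient. -/
abbrev qe {v w : PV g h} (e : PEdge g h v w) : (Qf g h).obj v ⟶ (Qf g h).obj w :=
  (Qf g h).map (tp g h e)

theorem sound {v w : Paths (PV g h)} {p q : v ⟶ w} (r : PRel g h p q) :
    (Qf g h).map p = (Qf g h).map q :=
  CategoryTheory.Quotient.sound _ r

theorem qe_comp_qe {u v w : PV g h} (e : PEdge g h u v) (e' : PEdge g h v w) :
    qe g h e ≫ qe g h e' = (Qf g h).map (tp g h e ≫ tp g h e') :=
  ((Qf g h).map_comp _ _).symm

/-- The functor `G ⥤ P`. -/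
def g' : ↥G ⥤ PC g h where
  obj a := (Qf g h).obj (PV.gv a)
  map f := qe g h (PEdge.ge f)
  map_id a := (sound g h (PRel.gid a)).trans ((Qf g h).map_id _)
  map_comp f f' := by rw [qe_comp_qe, sound g h (PRel.gcomp f f')]; rfl

/-- The functor `H ⥤ P`. -/
def h' : ↥H ⥤ PC g h where
  obj x := (Qf g h).obj (PV.hv x)
  map φ := qe g h (PEdge.he φ)
  map_id x := (sound g h (PRel.hid x)).trans ((Qf g h).map_id _)
  map_comp φ φ' := by rw [qe_comp_qe, sound g h (PRel.hcomp φ φ')]; rfl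

theorem fwd_bwd (k : ↥K) : qe g h (PEdge.fwd k) ≫ qe g h (PEdge.bwd k) = 𝟙 _ := by
  rw [qe_comp_qe, sound g h (PRel.fwdbwd k)]; exact (Qf g h).map_id _

theorem bwd_fwd (k : ↥K) : qe g h (PEdge.bwd k) ≫ qe g h (PEdge.fwd k) = 𝟙 _ := by
  rw [qe_comp_qe, sound g h (PRel.bwdfwd k)]; exact (Qf g h).map_id _

theorem nat_rel {k k' : ↥K} (f : k ⟶ k') :
    qe g h (PEdge.fwd k) ≫ qe g h (PEdge.ge (g.map f)) =
      qe g h (PEdge.he (h.map f)) ≫ qe g h (PEdge.fwd k') := by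
  rw [qe_comp_qe, qe_comp_qe]; exact sound g h (PRel.nat f)

theorem ge_comp_ge {a b c : ↥G} (f : a ⟶ b) (f' : b ⟶ c) :
    qe g h (PEdge.ge f) ≫ qe g h (PEdge.ge f') = qe g h (PEdge.ge (f ≫ f')) := by
  rw [qe_comp_qe, sound g h (PRel.gcomp f f')]; rfl

theorem he_comp_he {x y z : ↥H} (φ : x ⟶ y) (φ' : y ⟶ z) :
    qe g h (PEdge.he φ) ≫ qe g h (PEdge.he φ') = qe g h (PEdge.he (φ ≫ φ')) := by
  rw [qe_comp_qe, sound g h (PRel.hcomp φ φ')]; rfl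

instance qe_isIso {v w : PV g h} (e : PEdge g h v w) : IsIso (qe g h e) := by
  cases e with
  | ge f =>
    exact ⟨qe g h (PEdge.ge (Groupoid.inv f)), by
      rw [ge_comp_ge]; simpa using (show qe g h (PEdge.ge (𝟙 _)) = 𝟙 _ from (sound g h (PRel.gid _)).trans ((Qf g h).map_id _)), by
      rw [ge_comp_ge]; simpa using (show qe g h (PEdge.ge (𝟙 _)) = 𝟙 _ from (sound g h (PRel.gid _)).trans ((Qf g h).map_id _))⟩
  | he φ =>
    exact ⟨qe g h (PEdge.he (Groupoid.inv φ)), by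
      rw [he_comp_he]; simpa using (show qe g h (PEdge.he (𝟙 _)) = 𝟙 _ from (sound g h (PRel.hid _)).trans ((Qf g h).map_id _)), by
      rw [he_comp_he]; simpa using (show qe g h (PEdge.he (𝟙 _)) = 𝟙 _ from (sound g h (PRel.hid _)).trans ((Qf g h).map_id _))⟩
  | fwd k => exact ⟨qe g h (PEdge.bwd k), fwd_bwd g h k, bwd_fwd g h k⟩
  | bwd k => exact ⟨qe g h (PEdge.fwd k), bwd_fwd g h k, fwd_bwd g h k⟩

instance PC_isIso {p q : PC g h} (ψ : p ⟶ q) : IsIso ψ := by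
  induction ψ using CategoryTheory.Quotient.induction with
  | h f =>
    induction f using Paths.induction_fixed_source with
    | id => rw [(Qf g h).map_id]; infer_instance
    | comp p e hp =>
      rw [(Qf g h).map_comp]
      exact @IsIso.comp_isIso _ _ _ _ _ _ _ hp (qe_isIso g h e)

noncomputable instance : Groupoid (PC g h) := Groupoid.ofIsIso (fun f => PC_isIso g h f)


/-- The canonical natural isomorphism filling the pushout square. -/
def pushIso : h ⋙ h' g h ≅ g ⋙ g' g h :=
  NatIso.ofComponents
    (fun k => ⟨qe g h (PEdge.fwd k), qe g h (PEdge.bwd k), fwd_bwd g h k, bwd_fwd g h k⟩)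
    (fun {k k'} f => by
      dsimp [g', h']
      exact (nat_rel g h f).symm)

section UP

variable {F : Grpd.{u, u}} (g₁ : ↥G ⥤ ↥F) (h₁ : ↥H ⥤ ↥F) (β : h ⋙ h₁ ≅ g ⋙ g₁)

/-- The prefunctor used to define the lift. -/
def liftPre : PV g h ⥤q ↥F where
  obj v := match v with
    | .gv a => g₁.obj a
    | .hv x => h₁.obj x
  map e := match e with
    | .ge f => g₁.map f
    | .he φ => h₁.map φ
    | .fwd k => β.hom.app k
    | .bwd k => β.inv.app k

/-- The lift on the path category. -/
def liftPaths : Paths (PV g h) ⥤ ↥F := Paths.lift (liftPre g h g₁ h₁ β)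

theorem liftPaths_rel {v w : Paths (PV g h)} (p q : v ⟶ w) (r : PRel g h p q) :
    (liftPaths g h g₁ h₁ β).map p = (liftPaths g h g₁ h₁ β).map q := by
  induction r with
  | gid a =>
    simp only [liftPaths, Functor.map_comp, Paths.of_map, Paths.lift_toPath, Functor.map_id]
    erw [Paths.lift_toPath]
    exact g₁.map_id a
  | gcomp f f' =>
    simp only [liftPaths, Functor.map_comp, Paths.of_map, Paths.lift_toPath]
    erw [Functor.map_comp, Paths.lift_toPath, Paths.lift_toPath, Paths.lift_toPath]
    exact (g₁.map_comp f f').symm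
  | hid x =>
    simp only [liftPaths, Functor.map_comp, Paths.of_map, Paths.lift_toPath, Functor.map_id]
    erw [Paths.lift_toPath]
    exact h₁.map_id x
  | hcomp φ φ' =>
    simp only [liftPaths, Functor.map_comp, Paths.of_map, Paths.lift_toPath]
    erw [Functor.map_comp, Paths.lift_toPath, Paths.lift_toPath, Paths.lift_toPath]
    exact (h₁.map_comp φ φ').symm
  | fwdbwd k =>
    simp only [liftPaths, Functor.map_comp, Paths.of_map, Paths.lift_toPath, Functor.map_id]
    erw [Functor.map_comp, Paths.lift_toPath, Paths.lift_toPath]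
    exact β.hom_inv_id_app k
  | bwdfwd k =>
    simp only [liftPaths, Functor.map_comp, Paths.of_map, Paths.lift_toPath, Functor.map_id]
    erw [Functor.map_comp, Paths.lift_toPath, Paths.lift_toPath]
    exact β.inv_hom_id_app k
  | nat f =>
    simp only [liftPaths, Functor.map_comp, Paths.of_map, Paths.lift_toPath]
    erw [Functor.map_comp, Functor.map_comp, Paths.lift_toPath, Paths.lift_toPath, Paths.lift_toPath,
      Paths.lift_toPath]
    exact (β.hom.naturality f).symm

/-- The lift to the quotient. -/
def liftF : PC g h ⥤ ↥F :=
  CategoryTheory.Quotient.lift (PRel g h) (liftPaths g h g₁ h₁ β)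
    (fun _ _ p q r => liftPaths_rel g h g₁ h₁ β p q r)

@[simp] theorem liftF_map_q {v w : Paths (PV g h)} (p : v ⟶ w) :
    (liftF g h g₁ h₁ β).map ((Qf g h).map p) = (liftPaths g h g₁ h₁ β).map p := rfl

theorem liftF_comm_g : g' g h ⋙ liftF g h g₁ h₁ β = g₁ := by
  fapply CategoryTheory.Functor.ext
  · intro a; rfl
  · intro a b f
    show (liftPaths g h g₁ h₁ β).map (tp g h (PEdge.ge f)) = _
    simp only [liftPaths, Paths.of_map, Paths.lift_toPath, eqToHom_refl, Category.comp_id,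
      Category.id_comp]
    erw [Paths.lift_toPath]
    exact ((Category.id_comp _).trans (Category.comp_id _)).symm

theorem liftF_comm_h : h' g h ⋙ liftF g h g₁ h₁ β = h₁ := by
  fapply CategoryTheory.Functor.ext
  · intro x; rfl
  · intro x y φ
    show (liftPaths g h g₁ h₁ β).map (tp g h (PEdge.he φ)) = _
    simp only [liftPaths, Paths.of_map, Paths.lift_toPath, eqToHom_refl, Category.comp_id,
      Category.id_comp]
    erw [Paths.lift_toPath]
    exact ((Category.id_comp _).trans (Category.comp_id _)).symm

theorem liftF_fwd (k : ↥K) :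
    (liftF g h g₁ h₁ β).map (qe g h (PEdge.fwd k)) = β.hom.app k := by
  erw [liftF_map_q]
  simp only [liftPaths, Paths.of_map, Paths.lift_toPath]
  rfl

theorem liftF_bwd (k : ↥K) :
    (liftF g h g₁ h₁ β).map (qe g h (PEdge.bwd k)) = β.inv.app k := by
  erw [liftF_map_q]
  simp only [liftPaths, Paths.of_map, Paths.lift_toPath]
  rfl


theorem lift_uniq (f' : PC g h ⥤ ↥F)
    (e1 : g' g h ⋙ f' = g₁) (e2 : h' g h ⋙ f' = h₁)
    (hw : ∀ k : ↥K, f'.map (qe g h (PEdge.fwd k)) =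
      eqToHom (Functor.congr_obj e2 (h.obj k)) ≫ β.hom.app k ≫
        eqToHom (Functor.congr_obj e1 (g.obj k)).symm) :
    f' = liftF g h g₁ h₁ β := by
  apply CategoryTheory.Quotient.lift_unique'
  have hobj : ∀ v : PV g h, (Qf g h ⋙ f').obj v = (Qf g h ⋙ liftF g h g₁ h₁ β).obj v := by
    intro v
    cases v with
    | gv a => exact Functor.congr_obj e1 a
    | hv x => exact Functor.congr_obj e2 x
  fapply Paths.ext_functor
  · exact funext hobj
  · intro v w (e : PEdge g h v w)
    cases e with
    | ge f0 =>
      have := Functor.congr_hom e1 f0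
      dsimp [g'] at this
      rw [show (Qf g h ⋙ f').map (Quiver.Hom.toPath (PEdge.ge f0)) =
        f'.map (qe g h (PEdge.ge f0)) from rfl, this]
      have h2 : (Qf g h ⋙ liftF g h g₁ h₁ β).map (Quiver.Hom.toPath (PEdge.ge f0)) =
          g₁.map f0 := by
        show (liftPaths g h g₁ h₁ β).map (Quiver.Hom.toPath (PEdge.ge f0)) = _
        exact Paths.lift_toPath (liftPre g h g₁ h₁ β) (PEdge.ge f0)
      rw [h2]; rfl
    | he φ =>
      have := Functor.congr_hom e2 φ
      dsimp [h'] at this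
      rw [show (Qf g h ⋙ f').map (Quiver.Hom.toPath (PEdge.he φ)) =
        f'.map (qe g h (PEdge.he φ)) from rfl, this]
      have h2 : (Qf g h ⋙ liftF g h g₁ h₁ β).map (Quiver.Hom.toPath (PEdge.he φ)) =
          h₁.map φ := by
        show (liftPaths g h g₁ h₁ β).map (Quiver.Hom.toPath (PEdge.he φ)) = _
        exact Paths.lift_toPath (liftPre g h g₁ h₁ β) (PEdge.he φ)
      rw [h2]; rfl
    | fwd k =>
      rw [show (Qf g h ⋙ f').map (Quiver.Hom.toPath (PEdge.fwd k)) =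
        f'.map (qe g h (PEdge.fwd k)) from rfl, hw k]
      have h2 : (Qf g h ⋙ liftF g h g₁ h₁ β).map (Quiver.Hom.toPath (PEdge.fwd k)) =
          β.hom.app k := liftF_fwd g h g₁ h₁ β k
      rw [h2]; rfl
    | bwd k =>
      have hfb : f'.map (qe g h (PEdge.fwd k)) ≫ f'.map (qe g h (PEdge.bwd k)) = 𝟙 _ := by
        rw [← f'.map_comp, fwd_bwd g h k, f'.map_id]
      have hbf : f'.map (qe g h (PEdge.bwd k)) ≫ f'.map (qe g h (PEdge.fwd k)) = 𝟙 _ := by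
        rw [← f'.map_comp, bwd_fwd g h k, f'.map_id]
      have key : f'.map (qe g h (PEdge.bwd k)) =
          eqToHom (Functor.congr_obj e1 (g.obj k)) ≫ β.inv.app k ≫
            eqToHom (Functor.congr_obj e2 (h.obj k)).symm := by
        have h3 : f'.map (qe g h (PEdge.fwd k)) ≫
            (eqToHom (Functor.congr_obj e1 (g.obj k)) ≫ β.inv.app k ≫
              eqToHom (Functor.congr_obj e2 (h.obj k)).symm) = 𝟙 _ := by
          rw [hw k]
          erw [Category.assoc, Category.assoc, eqToHom_trans_assoc, eqToHom_refl, Category.id_comp,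
            β.hom_inv_id_app_assoc, eqToHom_trans, eqToHom_refl]
        exact (Category.comp_id _).symm.trans
          ((congrArg (fun t => f'.map (qe g h (PEdge.bwd k)) ≫ t) h3.symm).trans
            ((Category.assoc _ _ _).symm.trans
              ((congrArg (fun t => t ≫ (eqToHom (Functor.congr_obj e1 (g.obj k)) ≫ β.inv.app k ≫
                eqToHom (Functor.congr_obj e2 (h.obj k)).symm)) hbf).trans (Category.id_comp _))))
      rw [show (Qf g h ⋙ f').map (Quiver.Hom.toPath (PEdge.bwd k)) =
        f'.map (qe g h (PEdge.bwd k)) from rfl, key]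
      have h2 : (Qf g h ⋙ liftF g h g₁ h₁ β).map (Quiver.Hom.toPath (PEdge.bwd k)) =
          β.inv.app k := liftF_bwd g h g₁ h₁ β k
      rw [h2]; rfl

end UP

section FF

variable [g.Full] [g.Faithful] (x : ↥H)

/-- Mixed morphism data from `x` to an object of `G`. -/
structure Mix (b : ↥G) : Type u where
  k : ↥K
  q : x ⟶ h.obj k
  p : g.obj k ⟶ b

/-- Relation on mixed morphism data. -/
def MixRel {b : ↥G} (m m' : Mix g h x b) : Prop :=
  ∃ f : m.k ⟶ m'.k, m'.q = m.q ≫ h.map f ∧ m.p = g.map f ≫ m'.p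

/-- Normal forms for morphisms out of `x`. -/
def NF : PV g h → Type u
  | .gv b => Quot (MixRel g h x (b := b))
  | .hv y => x ⟶ y

/-- Action of an edge on normal forms. -/
noncomputable def actE : ∀ {v w : PV g h}, PEdge g h v w → NF g h x v → NF g h x w
  | _, _, .ge f0 => Quot.map (fun m => ⟨m.k, m.q, m.p ≫ f0⟩)
      (by rintro m m' ⟨f, h1, h2⟩
          exact ⟨f, h1, by rw [← Category.assoc, ← h2]⟩)
  | _, _, .he φ => fun n => n ≫ φ
  | _, _, .fwd k => fun n => Quot.mk _ ⟨k, n, 𝟙 _⟩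
  | _, _, .bwd k => Quot.lift (fun m => m.q ≫ h.map (g.preimage m.p))
      (by rintro m m' ⟨f, h1, h2⟩
          have hpre : g.preimage m.p = f ≫ g.preimage m'.p := by
            apply g.map_injective
            rw [Functor.map_comp, Functor.map_preimage, Functor.map_preimage, ← h2]
          rw [hpre, Functor.map_comp, h1, Category.assoc])

/-- Action of a path on normal forms. -/
noncomputable def actP {v : Paths (PV g h)} (n : NF g h x v) :
    ∀ {w : Paths (PV g h)}, (v ⟶ w) → NF g h x w
  | _, Quiver.Path.nil => n
  | _, Quiver.Path.cons p e => actE g h x e (actP n p)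

theorem actP_comp {u v w : Paths (PV g h)} (p : u ⟶ v) (q : v ⟶ w) (n : NF g h x u) :
    actP g h x n (p ≫ q) = actP g h x (actP g h x n p) q := by
  change Quiver.Path _ _ at q
  induction q with
  | nil => rfl
  | cons q e ih =>
    show actE g h x e (actP g h x n (p ≫ q)) = actE g h x e (actP g h x (actP g h x n p) q)
    rw [ih]

theorem actP_rel {v w : Paths (PV g h)} (p q : v ⟶ w) (r : PRel g h p q) (n : NF g h x v) :
    actP g h x n p = actP g h x n q := by
  induction r with
  | gid a =>
    show actE g h x (PEdge.ge (𝟙 a)) n = n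
    induction n using Quot.ind with
    | mk m => exact congrArg (Quot.mk _) (by simp)
  | gcomp f f' =>
    show actE g h x (PEdge.ge f') (actE g h x (PEdge.ge f) n) = actE g h x (PEdge.ge (f ≫ f')) n
    induction n using Quot.ind with
    | mk m => exact congrArg (Quot.mk _) (by simp [actE])
  | hid y =>
    show (n ≫ 𝟙 _) = n
    exact Category.comp_id n
  | hcomp φ φ' =>
    show (n ≫ φ) ≫ φ' = n ≫ (φ ≫ φ')
    exact Category.assoc n φ φ'
  | fwdbwd k =>
    show n ≫ h.map (g.preimage (𝟙 (g.obj k))) = n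
    have : g.preimage (𝟙 (g.obj k)) = 𝟙 k := by
      apply g.map_injective; rw [Functor.map_preimage, g.map_id]
    rw [this, h.map_id]; exact Category.comp_id n
  | bwdfwd k =>
    induction n using Quot.ind with
    | mk m =>
      show Quot.mk _ (⟨k, m.q ≫ h.map (g.preimage m.p), 𝟙 _⟩ : Mix g h x (g.obj k)) =
        Quot.mk _ m
      exact (Quot.sound ⟨g.preimage m.p, rfl, by rw [Functor.map_preimage, Category.comp_id]⟩).symm
  | nat f =>
    show Quot.mk _ (⟨_, n, 𝟙 _ ≫ g.map f⟩ : Mix g h x _) =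
      Quot.mk _ (⟨_, n ≫ h.map f, 𝟙 _⟩ : Mix g h x _)
    exact Quot.sound ⟨f, rfl, by simp⟩

theorem actP_congr {v w : Paths (PV g h)} (p q : v ⟶ w)
    (r : HomRel.CompClosure (PRel g h) p q) (n : NF g h x v) :
    actP g h x n p = actP g h x n q := by
  rcases r with ⟨_, _, f, m₁, m₂, g0, hr⟩
  rw [actP_comp, actP_comp, actP_comp, actP_comp, actP_rel g h x m₁ m₂ hr]

/-- Evaluation of a morphism of the pushout on normal forms. -/
noncomputable def evalQ {a b : PC g h} (ψ : a ⟶ b) : NF g h x a.as → NF g h x b.as :=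
  Quot.lift (fun p => fun n => actP g h x n p)
    (fun p q hr => funext (fun n => actP_congr g h x p q hr n)) ψ

theorem evalQ_q {v w : Paths (PV g h)} (p : v ⟶ w) (n : NF g h x v) :
    evalQ g h x ((Qf g h).map p) n = actP g h x n p := rfl

/-- Embedding of normal forms back into the pushout. -/
def embed : ∀ {v : PV g h}, NF g h x v → ((Qf g h).obj (PV.hv x) ⟶ (Qf g h).obj v)
  | .hv _ => fun φ => qe g h (PEdge.he φ)
  | .gv _ => Quot.lift (fun m => qe g h (PEdge.he m.q) ≫ qe g h (PEdge.fwd m.k) ≫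
      qe g h (PEdge.ge m.p))
      (by rintro m m' ⟨f, h1, h2⟩
          rw [h1, h2, ← ge_comp_ge, ← he_comp_he]
          rw [show qe g h (PEdge.fwd m.k) ≫ qe g h (PEdge.ge (g.map f)) ≫ qe g h (PEdge.ge m'.p)
              = (qe g h (PEdge.fwd m.k) ≫ qe g h (PEdge.ge (g.map f))) ≫ qe g h (PEdge.ge m'.p)
            from by rw [Category.assoc], nat_rel g h f]
          simp)

theorem embed_act {v w : PV g h} (e : PEdge g h v w) (n : NF g h x v) :
    embed g h x n ≫ qe g h e = embed g h x (actE g h x e n) := by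
  cases e with
  | ge f0 =>
    induction n using Quot.ind with
    | mk m =>
      show (qe g h (PEdge.he m.q) ≫ qe g h (PEdge.fwd m.k) ≫ qe g h (PEdge.ge m.p)) ≫
        qe g h (PEdge.ge f0) = qe g h (PEdge.he m.q) ≫ qe g h (PEdge.fwd m.k) ≫
          qe g h (PEdge.ge (m.p ≫ f0))
      rw [← ge_comp_ge]
      simp
  | he φ =>
    show qe g h (PEdge.he n) ≫ qe g h (PEdge.he φ) = qe g h (PEdge.he (n ≫ φ))
    exact he_comp_he g h n φ
  | fwd k =>
    show qe g h (PEdge.he n) ≫ qe g h (PEdge.fwd k) =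
      qe g h (PEdge.he n) ≫ qe g h (PEdge.fwd k) ≫ qe g h (PEdge.ge (𝟙 _))
    have : qe g h (PEdge.ge (𝟙 (g.obj k))) = 𝟙 _ := (g' g h).map_id _
    rw [this, Category.comp_id]
  | bwd k =>
    induction n using Quot.ind with
    | mk m =>
      show (qe g h (PEdge.he m.q) ≫ qe g h (PEdge.fwd m.k) ≫ qe g h (PEdge.ge m.p)) ≫
        qe g h (PEdge.bwd k) = qe g h (PEdge.he (m.q ≫ h.map (g.preimage m.p)))
      have hp : m.p = g.map (g.preimage m.p) := (g.map_preimage m.p).symm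
      rw [← he_comp_he]
      conv_lhs => rw [hp]
      simp only [Category.assoc]
      rw [reassoc_of% (nat_rel g h (g.preimage m.p)), fwd_bwd g h k]
      simp

theorem q_eq_embed {w : Paths (PV g h)} (p : (Paths.of (V := PV g h)).obj (PV.hv x) ⟶ w) :
    (Qf g h).map p = embed g h x (actP g h x (v := PV.hv x) (𝟙 x) p) := by
  induction p using Paths.induction_fixed_source with
  | id =>
    show (Qf g h).map (𝟙 _) = embed g h x (v := PV.hv x) (𝟙 x)
    erw [(Qf g h).map_id]
    show 𝟙 _ = qe g h (PEdge.he (𝟙 x))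
    exact ((h' g h).map_id x).symm
  | comp p e ih =>
    rw [(Qf g h).map_comp, ih]
    rw [show (Qf g h).map ((Paths.of (PV g h)).map e) = qe g h e from rfl]
    erw [embed_act]
    rfl

theorem h'_faithful : (h' g h).Faithful := by
  constructor
  intro y z φ ψ heq
  have h2 := congrArg (fun ρ : (h' g h).obj y ⟶ (h' g h).obj z =>
    evalQ g h y ρ (show NF g h y (PV.hv y) from 𝟙 y)) heq
  have h3 : 𝟙 y ≫ φ = 𝟙 y ≫ ψ := h2
  simpa using h3

theorem h'_full : (h' g h).Full := by
  constructor
  intro y z ψ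
  obtain ⟨p⟩ := ψ
  refine ⟨actP g h y (v := PV.hv y) (𝟙 y) p, ?_⟩
  have : (Qf g h).map p = embed g h y (actP g h y (v := PV.hv y) (𝟙 y) p) := q_eq_embed g h y p
  exact this.symm

end FF


theorem h'_essSurj [g.EssSurj] : (h' g h).EssSurj := by
  constructor
  intro b
  obtain ⟨v⟩ := b
  cases v with
  | hv y => exact ⟨y, ⟨Iso.refl _⟩⟩
  | gv a =>
    refine ⟨h.obj (g.objPreimage a), ⟨?_⟩⟩
    exact Iso.trans
      ⟨qe g h (PEdge.fwd _), qe g h (PEdge.bwd _), fwd_bwd g h _, bwd_fwd g h _⟩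
      ((g' g h).mapIso (g.objObjPreimageIso a))

/-- the pushout of groupoids along a fully faithful functor can be
chosen so that `h'` is fully faithful, and essentially surjective whenever `g` is. -/
theorem groupoid_pushout_exists_fullyFaithful (K G H : Grpd.{u, u})
    (g : ↥K ⥤ ↥G) (h : ↥K ⥤ ↥H) (hgFull : g.Full) (hgFaithful : g.Faithful) :
    ∃ (P : Grpd.{u, u}) (g' : ↥G ⥤ ↥P) (h' : ↥H ⥤ ↥P) (α : h ⋙ h' ≅ g ⋙ g'),
      (h'.Full ∧ h'.Faithful ∧ (g.EssSurj → h'.EssSurj)) ∧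
      ∀ (F : Grpd.{u, u}) (g₁ : ↥G ⥤ ↥F) (h₁ : ↥H ⥤ ↥F) (β : h ⋙ h₁ ≅ g ⋙ g₁),
        ∃! f : ↥P ⥤ ↥F,
          ∃ (e₁ : g' ⋙ f = g₁) (e₂ : h' ⋙ f = h₁),
            Functor.whiskerRight α.hom f =
              eqToHom (by rw [Functor.assoc, e₂]) ≫ β.hom ≫
                eqToHom (by rw [Functor.assoc, e₁]) := by
  haveI := hgFull
  haveI := hgFaithful
  refine ⟨Grpd.of (PC g h), g' g h, h' g h, pushIso g h,
    ⟨h'_full g h, h'_faithful g h, fun hEss => by haveI := hEss; exact h'_essSurj g h⟩, ?_⟩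
  intro F g₁ h₁ β
  refine ⟨liftF g h g₁ h₁ β,
    ⟨liftF_comm_g g h g₁ h₁ β, liftF_comm_h g h g₁ h₁ β, ?_⟩, ?_⟩
  · apply NatTrans.ext
    funext k
    simp only [NatTrans.comp_app, eqToHom_app, Functor.whiskerRight_app]
    show (liftF g h g₁ h₁ β).map (qe g h (PEdge.fwd k)) = _
    rw [liftF_fwd g h g₁ h₁ β k]
    exact (Category.comp_id _).symm.trans (Category.id_comp _).symm
  · rintro f' ⟨e1, e2, hw⟩
    apply lift_uniq g h g₁ h₁ β f' e1 e2
    intro k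
    have happ := congrArg (fun τ => τ.app k) hw
    simp only [NatTrans.comp_app, eqToHom_app, Functor.whiskerRight_app] at happ
    exact happ

end Paper
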